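/- Let (φ,Q,ξ,η,g) be a weak almost contact metric structure on M for which N⁽¹⁾(X,Y) = 0 for all smooth vector fields X,Y. Then [ξ,φX] = φ[ξ,X] for every smooth vector field X; equivalently, the Lie derivative £_ξφ (the tensor N⁽³⁾) vanishes identically. -/

import Mathlib

open scoped Manifold

noncomputable section

/-- Smooth vector fields on a manifold `M`, modelled as derivations of the algebra of smooth
real-valued functions on `M`. -/
abbrev VectorField {E : Type*} [NormedAddCommGroup E] [NormedSpace ℝ E]
    {H : Type*} [TopologicalSpace H] (I : ModelWithCorners ℝ E H)
    (M : Type*) [TopologicalSpace M] [ChartedSpace H M] :=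
  Derivation ℝ C^(⊤ : ℕ∞)⟮I, M; ℝ⟯ C^(⊤ : ℕ∞)⟮I, M; ℝ⟯

variable {E : Type*} [NormedAddCommGroup E] [NormedSpace ℝ E]
  {H : Type*} [TopologicalSpace H] {I : ModelWithCorners ℝ E H}
  {M : Type*} [TopologicalSpace M] [ChartedSpace H M]

/-- `dη(X,Y) = ½ (X(η(Y)) - Y(η(X)) - η([X,Y]))`. -/
def dEta (η : VectorField I M →ₗ[C^(⊤ : ℕ∞)⟮I, M; ℝ⟯] C^(⊤ : ℕ∞)⟮I, M; ℝ⟯)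
    (X Y : VectorField I M) : C^(⊤ : ℕ∞)⟮I, M; ℝ⟯ :=
  (2 : ℝ)⁻¹ • (X (η Y) - Y (η X) - η ⁅X, Y⁆)

/-- The Nijenhuis torsion `[φ,φ](X,Y) = φ²[X,Y] + [φX,φY] - φ[φX,Y] - φ[X,φY]`. -/
def nijenhuis (φ : VectorField I M → VectorField I M) (X Y : VectorField I M) :
    VectorField I M :=
  φ (φ ⁅X, Y⁆) + ⁅φ X, φ Y⁆ - φ ⁅φ X, Y⁆ - φ ⁅X, φ Y⁆

/-- `N⁽¹⁾(X,Y) = [φ,φ](X,Y) + 2 dη(X,Y) Qξ`. -/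
def N1 (φ Q : VectorField I M →ₗ[C^(⊤ : ℕ∞)⟮I, M; ℝ⟯] VectorField I M)
    (ξ : VectorField I M) (η : VectorField I M →ₗ[C^(⊤ : ℕ∞)⟮I, M; ℝ⟯] C^(⊤ : ℕ∞)⟮I, M; ℝ⟯)
    (X Y : VectorField I M) : VectorField I M :=
  nijenhuis ⇑φ X Y + ((2 : ℝ) • dEta η X Y) • Q ξ

/-- `N⁽²⁾(X,Y) = (φX)(η(Y)) - η([φX,Y]) - (φY)(η(X)) + η([φY,X])`. -/
def N2 (φ : VectorField I M →ₗ[C^(⊤ : ℕ∞)⟮I, M; ℝ⟯] VectorField I M)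
    (η : VectorField I M →ₗ[C^(⊤ : ℕ∞)⟮I, M; ℝ⟯] C^(⊤ : ℕ∞)⟮I, M; ℝ⟯)
    (X Y : VectorField I M) : C^(⊤ : ℕ∞)⟮I, M; ℝ⟯ :=
  (φ X) (η Y) - η ⁅φ X, Y⁆ - (φ Y) (η X) + η ⁅φ Y, X⁆

set_option maxHeartbeats 2000000 in
theorem weak_normal_implies_N3_vanishes
    [FiniteDimensional ℝ E] [I.Boundaryless] [IsManifold I (⊤ : ℕ∞) M]
    (n : ℕ) (hn : 1 ≤ n) (hdim : Module.finrank ℝ E = 2 * n + 1)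
    (φ Q : VectorField I M →ₗ[C^(⊤ : ℕ∞)⟮I, M; ℝ⟯] VectorField I M)
    (hQ : Function.Bijective Q)
    (ξ : VectorField I M)
    (η : VectorField I M →ₗ[C^(⊤ : ℕ∞)⟮I, M; ℝ⟯] C^(⊤ : ℕ∞)⟮I, M; ℝ⟯)
    (g : VectorField I M →ₗ[C^(⊤ : ℕ∞)⟮I, M; ℝ⟯] VectorField I M →ₗ[C^(⊤ : ℕ∞)⟮I, M; ℝ⟯] C^(⊤ : ℕ∞)⟮I, M; ℝ⟯)
    (ν : ℝ) (hν : 0 < ν)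
    (hφφ : ∀ X, φ (φ X) = -(Q X) + η X • Q ξ)
    (hηξ : η ξ = 1)
    (hQξ : Q ξ = ν • ξ)
    (hD : ∀ X, η X = 0 → η (φ X) = 0)
    (hg_symm : ∀ X Y, g X Y = g Y X)
    (hg_pos : ∀ X (x : M), 0 ≤ g X X x)
    (hg_def : ∀ X, g X X = 0 → X = 0)
    (hcompat : ∀ X Y, g (φ X) (φ Y) = g X (Q Y) - η X * η (Q Y))
    (hN1 : ∀ X Y, N1 φ Q ξ η X Y = 0)
    :
    ∀ X, ⁅ξ, φ X⁆ = φ ⁅ξ, X⁆ := by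
  -- `a² = 0 → a = 0` for smooth functions
  have sq_zero : ∀ a : C^(⊤ : ℕ∞)⟮I, M; ℝ⟯, a * a = 0 → a = 0 := by
    intro a h
    ext x
    have h2 := DFunLike.congr_fun h x
    simp at h2 ⊢
    exact h2
  -- φ²ξ = 0
  have hφφξ : φ (φ ξ) = 0 := by
    rw [hφφ, hηξ, one_smul, neg_add_cancel]
  -- η(φX) = ηX · η(φξ)
  have hηφ' : ∀ X, η (φ X) = η X * η (φ ξ) := by
    intro X
    have h0 : η (X - η X • ξ) = 0 := by
      rw [map_sub, map_smul, smul_eq_mul, hηξ, mul_one, sub_self]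
    have h1 := hD _ h0
    rw [map_sub, map_smul, map_sub, map_smul, smul_eq_mul, sub_eq_zero] at h1
    exact h1
  -- η(φξ) = 0
  have hηφξ : η (φ ξ) = 0 := by
    apply sq_zero
    have h := hηφ' (φ ξ)
    rw [hφφξ, map_zero] at h
    exact h.symm
  -- η(φX) = 0 for all X
  have hηφ : ∀ X, η (φ X) = 0 := by
    intro X; rw [hηφ' X, hηφξ, mul_zero]
  -- φξ = 0
  have hφξ : φ ξ = 0 := by
    apply hg_def
    obtain ⟨W, hW⟩ := hQ.2 (φ ξ)
    have h := hcompat (φ ξ) W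
    rw [hφφξ, map_zero, LinearMap.zero_apply, hηφξ, zero_mul, sub_zero, hW] at h
    exact h.symm
  -- φ(Qξ) = 0
  have hφQξ : φ (Q ξ) = 0 := by
    rw [hQξ, LinearMap.map_smul_of_tower, hφξ, smul_zero]
  -- φQ = Qφ
  have hcomm : ∀ X, φ (Q X) = Q (φ X) := by
    intro X
    have e1 : φ (φ (φ X)) = -(Q (φ X)) := by
      rw [hφφ (φ X), hηφ X, zero_smul, add_zero]
    have e2 : φ (φ (φ X)) = -(φ (Q X)) := by
      rw [hφφ X, map_add, map_neg, map_smul, hφQξ, smul_zero, add_zero]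
    have := e1.symm.trans e2
    exact (neg_injective this).symm
  have zero_br : ∀ Z : VectorField I M, ⁅(0 : VectorField I M), Z⁆ = 0 := by
    intro Z
    ext f
    simp [Derivation.commutator_apply]
  -- key identity from N1(ξ,Y) = 0:  φ[ξ,φY] = -Q[ξ,Y] + ξ(ηY)·Qξ
  have hstar : ∀ Y, φ ⁅ξ, φ Y⁆ = -(Q ⁅ξ, Y⁆) + (ξ (η Y)) • Q ξ := by
    intro Y
    have h := hN1 ξ Y
    simp only [N1, nijenhuis, dEta] at h
    rw [hφξ, zero_br, zero_br, map_zero, hηξ, Derivation.map_one_eq_zero, sub_zero,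
      smul_smul] at h
    norm_num at h
    rw [hφφ ⁅ξ, Y⁆] at h
    linear_combination (norm := module) -h
  -- [ξ,φY] = φ[ξ,Y] + η([ξ,φY])·ξ
  have hA : ∀ Y, ⁅ξ, φ Y⁆ = φ ⁅ξ, Y⁆ + η ⁅ξ, φ Y⁆ • ξ := by
    intro Y
    apply hQ.1
    have h2 := congrArg (⇑φ) (hstar Y)
    rw [hφφ ⁅ξ, φ Y⁆, map_add, map_neg, map_smul, hcomm, hφQξ, smul_zero,
      add_zero] at h2
    rw [map_add, map_smul]
    linear_combination (norm := module) -h2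
  -- ξ(η(Y)) = η([ξ,Y])
  have hdeta : ∀ Y, ξ (η Y) = η ⁅ξ, Y⁆ := by
    intro Y
    have h2 := congrArg (⇑φ) (hA Y)
    rw [map_add, map_smul, hφξ, smul_zero, add_zero, hφφ ⁅ξ, Y⁆, hstar Y] at h2
    have h3 : (ξ (η Y) - η ⁅ξ, Y⁆) • Q ξ = 0 := by
      linear_combination (norm := module) h2
    have h4 := congrArg (⇑η) h3
    rw [map_smul, map_zero, smul_eq_mul, hQξ, LinearMap.map_smul_of_tower, hηξ] at h4
    have h5 : ξ (η Y) - η ⁅ξ, Y⁆ = 0 := by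
      ext x
      have h6 := DFunLike.congr_fun h4 x
      simp at h6 ⊢
      rcases h6 with h6 | h6
      · exact absurd h6 (ne_of_gt hν)
      · exact h6
    rw [sub_eq_zero] at h5
    exact h5
  -- conclusion
  intro X
  have h := hA X
  have h0 : η ⁅ξ, φ X⁆ = 0 := by
    rw [← hdeta (φ X), hηφ X, map_zero]
  rw [h0, zero_smul, add_zero] at h
  exact h
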